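/- Let A, B be bounded positive operators on a Hilbert space with sum C = A + B, and suppose B ≤ αA for some α ≥ 0. Then for all n ≥ 1, B − (nA : B) ≤ (α/(n+α))·B in the Loewner order, and consequently the parallel sums nA : B converge strongly and increasingly to B as n → ∞. -/

import Mathlib

open Filter Topology ContinuousLinearMap

section helpers
variable {H : Type*} [NormedAddCommGroup H] [InnerProductSpace ℂ H] [CompleteSpace H]

local notation "⟪" x ", " y "⟫" => @inner ℂ _ _ x y

open RCLike

lemma myIsPos_iff (T : H →L[ℂ] H) :
    T.IsPositive ↔ ∀ x, im ⟪T x, x⟫ = 0 ∧ 0 ≤ re ⟪T x, x⟫ := by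
  rw [isPositive_iff_complex]
  refine forall_congr' fun x => and_congr_left' ?_
  constructor
  · intro h; rw [← h]; simp
  · intro h
    apply RCLike.ext
    · simp
    · simp [h]

lemma myNonneg_iff (T : H →L[ℂ] H) :
    0 ≤ T ↔ ∀ x, im ⟪T x, x⟫ = 0 ∧ 0 ≤ re ⟪T x, x⟫ := by
  rw [nonneg_iff_isPositive, myIsPos_iff]

lemma form_smul (r : ℝ) (T : H →L[ℂ] H) (x : H) :
    ⟪(r • T) x, x⟫ = (r : ℂ) * ⟪T x, x⟫ := by
  rw [ContinuousLinearMap.smul_apply, real_smul_eq_coe_smul (K := ℂ), inner_smul_left]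
  simp

lemma aux_smul_nonneg {T : H →L[ℂ] H} (hT : 0 ≤ T) {r : ℝ} (hr : 0 ≤ r) :
    0 ≤ r • T := by
  rw [myNonneg_iff] at hT ⊢
  intro x
  obtain ⟨h1, h2⟩ := hT x
  rw [form_smul]
  constructor
  · simp [h1]
  · simpa [h1] using mul_nonneg hr h2

lemma aux_one_nonneg : (0 : H →L[ℂ] H) ≤ 1 :=
  (nonneg_iff_isPositive _).mpr isPositive_one

lemma aux_smul_one_unit {r : ℝ} (hr : 0 < r) : IsUnit (r • (1 : H →L[ℂ] H)) := by
  have h : ∀ s t : ℝ, s * t = 1 → (s • (1 : H →L[ℂ] H)) * (t • 1) = 1 := by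
    intro s t hst
    rw [smul_mul_smul_comm, mul_one, hst, one_smul]
  exact isUnit_iff_exists.mpr ⟨r⁻¹ • 1, h r r⁻¹ (mul_inv_cancel₀ hr.ne'),
    h r⁻¹ r (inv_mul_cancel₀ hr.ne')⟩


lemma aux_add_unit {T : H →L[ℂ] H} (hT : 0 ≤ T) {ε : ℝ} (hε : 0 < ε) :
    IsUnit (T + ε • 1) ∧ 0 ≤ T + ε • 1 := by
  have h1 : (0 : H →L[ℂ] H) ≤ ε • 1 := aux_smul_nonneg aux_one_nonneg hε.le
  have h2 : (ε • 1 : H →L[ℂ] H) ≤ T + ε • 1 := le_add_of_nonneg_left hT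
  exact ⟨CStarAlgebra.isUnit_of_le _ h2 (by unfold IsStrictlyPositive; exact ⟨h1, aux_smul_one_unit hε⟩), add_nonneg hT h1⟩

lemma par_nonneg {X Y : H →L[ℂ] H} (hX : 0 ≤ X) (hY : 0 ≤ Y)
    (uX : IsUnit X) (uY : IsUnit Y) :
    0 ≤ Ring.inverse (Ring.inverse X + Ring.inverse Y) := by
  lift X to (H →L[ℂ] H)ˣ using uX
  lift Y to (H →L[ℂ] H)ˣ using uY
  rw [Ring.inverse_unit, Ring.inverse_unit]
  have hiX : (0 : H →L[ℂ] H) ≤ ↑X⁻¹ := CFC.inv_nonneg_of_nonneg X hX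
  have hiY : (0 : H →L[ℂ] H) ≤ ↑Y⁻¹ := CFC.inv_nonneg_of_nonneg Y hY
  have hle : (↑Y⁻¹ : H →L[ℂ] H) ≤ ↑X⁻¹ + ↑Y⁻¹ := le_add_of_nonneg_left hiX
  have uW : IsUnit ((↑X⁻¹ + ↑Y⁻¹ : H →L[ℂ] H)) :=
    CStarAlgebra.isUnit_of_le _ hle (by unfold IsStrictlyPositive; exact ⟨hiY, Y⁻¹.isUnit⟩)
  lift (↑X⁻¹ + ↑Y⁻¹ : H →L[ℂ] H) to (H →L[ℂ] H)ˣ using uW with W hW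
  rw [Ring.inverse_unit]
  exact CFC.inv_nonneg_of_nonneg W (hW ▸ add_nonneg hiX hiY)

lemma par_le_right {X Y : H →L[ℂ] H} (hX : 0 ≤ X) (hY : 0 ≤ Y)
    (uX : IsUnit X) (uY : IsUnit Y) :
    Ring.inverse (Ring.inverse X + Ring.inverse Y) ≤ Y := by
  lift X to (H →L[ℂ] H)ˣ using uX
  lift Y to (H →L[ℂ] H)ˣ using uY
  rw [Ring.inverse_unit, Ring.inverse_unit]
  have hiX : (0 : H →L[ℂ] H) ≤ ↑X⁻¹ := CFC.inv_nonneg_of_nonneg X hX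
  have hiY : (0 : H →L[ℂ] H) ≤ ↑Y⁻¹ := CFC.inv_nonneg_of_nonneg Y hY
  have hle : (↑Y⁻¹ : H →L[ℂ] H) ≤ ↑X⁻¹ + ↑Y⁻¹ := le_add_of_nonneg_left hiX
  have uW : IsUnit ((↑X⁻¹ + ↑Y⁻¹ : H →L[ℂ] H)) :=
    CStarAlgebra.isUnit_of_le _ hle (by unfold IsStrictlyPositive; exact ⟨hiY, Y⁻¹.isUnit⟩)
  lift (↑X⁻¹ + ↑Y⁻¹ : H →L[ℂ] H) to (H →L[ℂ] H)ˣ using uW with W hW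
  rw [Ring.inverse_unit]
  have := CStarAlgebra.inv_le_inv (a := Y⁻¹) (b := W) hiY (hW ▸ hle)
  simpa using this

lemma par_mono_left {X₁ X₂ Y : H →L[ℂ] H} (hX₁ : 0 ≤ X₁) (hY : 0 ≤ Y)
    (u₁ : IsUnit X₁) (uY : IsUnit Y) (h12 : X₁ ≤ X₂) :
    Ring.inverse (Ring.inverse X₁ + Ring.inverse Y) ≤
      Ring.inverse (Ring.inverse X₂ + Ring.inverse Y) := by
  have u₂ : IsUnit X₂ := CStarAlgebra.isUnit_of_le _ h12 (by unfold IsStrictlyPositive; exact ⟨hX₁, u₁⟩)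
  lift X₁ to (H →L[ℂ] H)ˣ using u₁
  lift X₂ to (H →L[ℂ] H)ˣ using u₂
  lift Y to (H →L[ℂ] H)ˣ using uY
  rw [Ring.inverse_unit, Ring.inverse_unit, Ring.inverse_unit]
  have hi1 : (0 : H →L[ℂ] H) ≤ ↑X₁⁻¹ := CFC.inv_nonneg_of_nonneg X₁ hX₁
  have hi2 : (0 : H →L[ℂ] H) ≤ ↑X₂⁻¹ := CFC.inv_nonneg_of_nonneg X₂ (hX₁.trans h12)
  have hiY : (0 : H →L[ℂ] H) ≤ ↑Y⁻¹ := CFC.inv_nonneg_of_nonneg Y hY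
  have hflip : (↑X₂⁻¹ : H →L[ℂ] H) ≤ ↑X₁⁻¹ := CStarAlgebra.inv_le_inv hX₁ h12
  have hW2le : (↑X₂⁻¹ + ↑Y⁻¹ : H →L[ℂ] H) ≤ ↑X₁⁻¹ + ↑Y⁻¹ := add_le_add_left hflip _
  have hleY2 : (↑Y⁻¹ : H →L[ℂ] H) ≤ ↑X₂⁻¹ + ↑Y⁻¹ := le_add_of_nonneg_left hi2
  have uW2 : IsUnit ((↑X₂⁻¹ + ↑Y⁻¹ : H →L[ℂ] H)) :=
    CStarAlgebra.isUnit_of_le _ hleY2 (by unfold IsStrictlyPositive; exact ⟨hiY, Y⁻¹.isUnit⟩)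
  have uW1 : IsUnit ((↑X₁⁻¹ + ↑Y⁻¹ : H →L[ℂ] H)) :=
    CStarAlgebra.isUnit_of_le _ hW2le (by unfold IsStrictlyPositive; exact ⟨add_nonneg hi2 hiY, uW2⟩)
  have h02 : (0 : H →L[ℂ] H) ≤ ↑X₂⁻¹ + ↑Y⁻¹ := add_nonneg hi2 hiY
  lift (↑X₂⁻¹ + ↑Y⁻¹ : H →L[ℂ] H) to (H →L[ℂ] H)ˣ using uW2 with W2 hW2
  lift (↑X₁⁻¹ + ↑Y⁻¹ : H →L[ℂ] H) to (H →L[ℂ] H)ˣ using uW1 with W1 hW1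
  rw [Ring.inverse_unit, Ring.inverse_unit]
  exact CStarAlgebra.inv_le_inv (a := W2) (b := W1) h02 hW2le


lemma scalar_ineq {a ε : ℝ} (ha : 0 < a) (hε : 0 < ε) {x : ℝ} (hx : 0 ≤ x) :
    a / (a + 1) * x ≤ ((a * x + ε)⁻¹ + (x + ε)⁻¹)⁻¹ := by
  have hp : 0 < a * x + ε := by positivity
  have hq : 0 < x + ε := by positivity
  have hsum : (a * x + ε)⁻¹ + (x + ε)⁻¹ = ((a * x + ε) + (x + ε)) / ((a * x + ε) * (x + ε)) := by
    field_simp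
    ring
  rw [hsum, inv_div, div_mul_eq_mul_div, div_le_div_iff₀ (by positivity) (by positivity)]
  nlinarith [mul_nonneg hε.le hx, mul_nonneg (mul_nonneg hε.le hx) (sq_nonneg a),
    mul_pos hε hε]

lemma cfc_lower (B : H →L[ℂ] H) (hB : 0 ≤ B) {a ε : ℝ} (ha : 0 < a) (hε : 0 < ε) :
    (a / (a + 1)) • B ≤
      Ring.inverse (Ring.inverse (a • B + ε • 1) + Ring.inverse (B + ε • 1)) := by
  have hsa : IsSelfAdjoint B := ((nonneg_iff_isPositive B).mp hB).isSelfAdjoint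
  have hspec : ∀ x ∈ spectrum ℝ B, 0 ≤ x := fun x hx => spectrum_nonneg_of_nonneg hB hx
  set f : ℝ → ℝ := fun x => a * x + ε with hf
  set g : ℝ → ℝ := fun x => x + ε with hg
  have cf : Continuous f := by continuity
  have cg : Continuous g := by continuity
  have hf0 : ∀ x ∈ spectrum ℝ B, f x ≠ 0 := by
    intro x hx
    have := hspec x hx
    exact ne_of_gt (by positivity)
  have hg0 : ∀ x ∈ spectrum ℝ B, g x ≠ 0 := by
    intro x hx
    have := hspec x hx
    exact ne_of_gt (by positivity)
  have h1 : cfc f B = a • B + ε • 1 := by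
    rw [hf]
    rw [cfc_add (a := B) (fun x => a * x) (fun _ => ε) (by fun_prop) (by fun_prop),
      cfc_const_mul_id a B hsa, cfc_const ε B hsa, Algebra.algebraMap_eq_smul_one]
  have h2 : cfc g B = B + ε • 1 := by
    rw [hg]
    rw [cfc_add (a := B) (fun x => x) (fun _ => ε) (by fun_prop) (by fun_prop),
      cfc_id' ℝ B hsa, cfc_const ε B hsa, Algebra.algebraMap_eq_smul_one]
  have h3 : Ring.inverse (a • B + ε • 1) = cfc (fun x => (f x)⁻¹) B := by
    rw [← h1, cfc_inv f B hf0 cf.continuousOn hsa]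
  have h4 : Ring.inverse (B + ε • 1) = cfc (fun x => (g x)⁻¹) B := by
    rw [← h2, cfc_inv g B hg0 cg.continuousOn hsa]
  have cF : ContinuousOn (fun x => (f x)⁻¹ + (g x)⁻¹) (spectrum ℝ B) :=
    ((cf.continuousOn).inv₀ hf0).add ((cg.continuousOn).inv₀ hg0)
  have hF0 : ∀ x ∈ spectrum ℝ B, (f x)⁻¹ + (g x)⁻¹ ≠ 0 := by
    intro x hx
    have hx0 := hspec x hx
    have hfp : 0 < f x := by rw [hf]; positivity
    have hgp : 0 < g x := by rw [hg]; positivity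
    positivity
  have h5 : Ring.inverse (Ring.inverse (a • B + ε • 1) + Ring.inverse (B + ε • 1))
      = cfc (fun x => ((f x)⁻¹ + (g x)⁻¹)⁻¹) B := by
    rw [h3, h4, ← cfc_add (a := B) (fun x => (f x)⁻¹) (fun x => (g x)⁻¹)
        ((cf.continuousOn).inv₀ hf0) ((cg.continuousOn).inv₀ hg0),
      cfc_inv (fun x => (f x)⁻¹ + (g x)⁻¹) B hF0 cF hsa]
  rw [h5]
  have hgoal : (a / (a + 1)) • B = cfc (fun x : ℝ => (a / (a + 1)) * x) B :=
    (cfc_const_mul_id _ B hsa).symm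
  rw [hgoal]
  refine cfc_mono (fun x hx => ?_) (by fun_prop) (cF.inv₀ hF0)
  have hx0 := hspec x hx
  simpa [hf, hg] using scalar_ineq ha hε hx0


lemma re_form_sub (T U : H →L[ℂ] H) (ξ : H) :
    re ⟪(T - U) ξ, ξ⟫ = re ⟪T ξ, ξ⟫ - re ⟪U ξ, ξ⟫ := by
  rw [ContinuousLinearMap.sub_apply, inner_sub_left, map_sub]

lemma im_form_sub (T U : H →L[ℂ] H) (ξ : H) :
    im ⟪(T - U) ξ, ξ⟫ = im ⟪T ξ, ξ⟫ - im ⟪U ξ, ξ⟫ := by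
  rw [ContinuousLinearMap.sub_apply, inner_sub_left, map_sub]

lemma re_form_smul (r : ℝ) (T : H →L[ℂ] H) (ξ : H) :
    re ⟪(r • T) ξ, ξ⟫ = r * re ⟪T ξ, ξ⟫ := by
  rw [form_smul]
  exact re_ofReal_mul r _

lemma im_form_smul (r : ℝ) (T : H →L[ℂ] H) (ξ : H) :
    im ⟪(r • T) ξ, ξ⟫ = r * im ⟪T ξ, ξ⟫ := by
  rw [form_smul]
  exact im_ofReal_mul r _

lemma form_add_smul_one (T : H →L[ℂ] H) (ε : ℝ) (ξ : H) :
    re ⟪(T + ε • 1) ξ, ξ⟫ = re ⟪T ξ, ξ⟫ + ε * ‖ξ‖ ^ 2 := by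
  rw [ContinuousLinearMap.add_apply, inner_add_left, map_add, re_form_smul]
  simp [inner_self_eq_norm_sq, ← Complex.ofReal_pow]

lemma form_le {T T' : H →L[ℂ] H} (h : T ≤ T') (ξ : H) :
    re ⟪T ξ, ξ⟫ ≤ re ⟪T' ξ, ξ⟫ := by
  have h2 := ((myIsPos_iff _).mp ((ContinuousLinearMap.le_def T T').mp h) ξ).2
  rw [re_form_sub] at h2
  linarith

lemma tendsto_re_inner {ι : Type*} {l : Filter ι} {f : ι → H} {v ξ : H}
    (h : Tendsto f l (𝓝 v)) :
    Tendsto (fun i => re ⟪f i, ξ⟫) l (𝓝 (re ⟪v, ξ⟫)) :=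
  ((RCLike.continuous_re.comp (continuous_id.inner continuous_const)).tendsto v).comp h

lemma tendsto_im_inner {ι : Type*} {l : Filter ι} {f : ι → H} {v ξ : H}
    (h : Tendsto f l (𝓝 v)) :
    Tendsto (fun i => im ⟪f i, ξ⟫) l (𝓝 (im ⟪v, ξ⟫)) :=
  ((RCLike.continuous_im.comp (continuous_id.inner continuous_const)).tendsto v).comp h

set_option synthInstance.maxHeartbeats 1000000 in
lemma norm_apply_sq_le {T : H →L[ℂ] H} (hT : 0 ≤ T) (ξ : H) :
    ‖T ξ‖ ^ 2 ≤ ‖T‖ * re ⟪T ξ, ξ⟫ := by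
  set S := CFC.sqrt T with hSdef
  have hS : 0 ≤ S := CFC.sqrt_nonneg T
  have hSS : S * S = T := CFC.sqrt_mul_sqrt_self T hT
  have hSsa : IsSelfAdjoint S := IsSelfAdjoint.of_nonneg hS
  have hTx : ∀ x, T x = S (S x) := by
    intro x; rw [← hSS]; rfl
  have hadj : ContinuousLinearMap.adjoint S = S := by
    rw [← ContinuousLinearMap.star_eq_adjoint, hSsa.star_eq]
  have hkey : ‖S ξ‖ ^ 2 = re ⟪T ξ, ξ⟫ := by
    have h' : ⟪T ξ, ξ⟫ = ⟪S ξ, S ξ⟫ := by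
      rw [hTx, show S (S ξ) = ContinuousLinearMap.adjoint S (S ξ) from by rw [hadj],
        ContinuousLinearMap.adjoint_inner_left]
    rw [h', inner_self_eq_norm_sq]
  have hnorm : ‖T‖ = ‖S‖ * ‖S‖ := by
    rw [← hSS]
    nth_rewrite 2 [← hSsa.star_eq]
    exact CStarRing.norm_self_mul_star
  calc ‖T ξ‖ ^ 2 = ‖S (S ξ)‖ ^ 2 := by rw [hTx]
    _ ≤ (‖S‖ * ‖S ξ‖) ^ 2 := by
        have := S.le_opNorm (S ξ)
        exact pow_le_pow_left₀ (norm_nonneg _) this 2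
    _ = ‖S‖ * ‖S‖ * ‖S ξ‖ ^ 2 := by ring
    _ = ‖T‖ * re ⟪T ξ, ξ⟫ := by rw [hkey, hnorm]


noncomputable def parS (A B : H →L[ℂ] H) (n : ℕ) (ε : ℝ) : H →L[ℂ] H :=
  Ring.inverse (Ring.inverse ((n : ℝ) • A + ε • 1) + Ring.inverse (B + ε • 1))

end helpers

set_option maxHeartbeats 2000000
set_option synthInstance.maxHeartbeats 1000000

section main
variable {H : Type*} [NormedAddCommGroup H] [InnerProductSpace ℂ H] [CompleteSpace H]
local notation "⟪" x ", " y "⟫" => @inner ℂ _ _ x y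
open RCLike

theorem ando_absolute_continuity_lemma'
    (A B : H →L[ℂ] H) (hA : A.IsPositive) (hB : B.IsPositive)
    (α : ℝ) (hα : 0 ≤ α) (hBA : (α • A - B).IsPositive)
    (P : ℕ → (H →L[ℂ] H))
    (hP : ∀ n : ℕ, ∀ ξ : H, Tendsto (fun ε : ℝ =>
        (Ring.inverse (Ring.inverse ((n : ℝ) • A + ε • 1) + Ring.inverse (B + ε • 1))) ξ)
      (𝓝[>] (0 : ℝ)) (𝓝 (P n ξ))) :
    (∀ n : ℕ, 1 ≤ n → ((α / (n + α)) • B - (B - P n)).IsPositive) ∧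
      (∀ n : ℕ, 1 ≤ n → (P (n + 1) - P n).IsPositive) ∧
      ∀ ξ : H, Tendsto (fun n : ℕ => P n ξ) atTop (𝓝 (B ξ)) := by
  have hA0 : 0 ≤ A := (nonneg_iff_isPositive A).mpr hA
  have hB0 : 0 ≤ B := (nonneg_iff_isPositive B).mpr hB
  have hBA0 : 0 ≤ α • A - B := (nonneg_iff_isPositive _).mpr hBA
  have hSP : ∀ n ξ, Tendsto (fun ε : ℝ => parS A B n ε ξ) (𝓝[>] (0:ℝ)) (𝓝 (P n ξ)) := hP
  have hXf : ∀ (n : ℕ) {ε : ℝ}, 0 < ε →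
      IsUnit ((n:ℝ) • A + ε • 1) ∧ 0 ≤ (n:ℝ) • A + ε • 1 :=
    fun n _ hε => aux_add_unit (aux_smul_nonneg hA0 (Nat.cast_nonneg n)) hε
  have hYf : ∀ {ε : ℝ}, 0 < ε → IsUnit (B + ε • 1) ∧ 0 ≤ B + ε • 1 :=
    fun hε => aux_add_unit hB0 hε
  have hS0 : ∀ (n : ℕ) {ε : ℝ}, 0 < ε → 0 ≤ parS A B n ε := fun n _ hε =>
    par_nonneg (hXf n hε).2 (hYf hε).2 (hXf n hε).1 (hYf hε).1
  have hSY : ∀ (n : ℕ) {ε : ℝ}, 0 < ε → parS A B n ε ≤ B + ε • 1 := fun n _ hε =>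
    par_le_right (hXf n hε).2 (hYf hε).2 (hXf n hε).1 (hYf hε).1
  have hSmono : ∀ (n : ℕ) {ε : ℝ}, 0 < ε → parS A B n ε ≤ parS A B (n+1) ε := by
    intro n ε hε
    refine par_mono_left (hXf n hε).2 (hYf hε).2 (hXf n hε).1 (hYf hε).1 ?_
    have heq : ((n+1:ℕ):ℝ) • A + ε • 1 = A + ((n:ℝ) • A + ε • 1) := by
      push_cast
      rw [add_smul, one_smul]
      abel
    rw [heq]
    exact le_add_of_nonneg_left hA0
  have hSlow : ∀ (n : ℕ), 1 ≤ n → 0 < α → ∀ {ε : ℝ}, 0 < ε →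
      ((n : ℝ)/(n + α)) • B ≤ parS A B n ε := by
    intro n hn hα' ε hε
    have hnpos : (0:ℝ) < n := by exact_mod_cast hn
    have ha : 0 < (n:ℝ)/α := div_pos hnpos hα'
    have hXX : ((n:ℝ)/α) • B + ε • 1 ≤ (n:ℝ) • A + ε • 1 := by
      refine add_le_add ?_ le_rfl
      have key : (n:ℝ) • A - ((n:ℝ)/α) • B = ((n:ℝ)/α) • (α • A - B) := by
        rw [smul_sub, smul_smul]
        field_simp
      have h0 : 0 ≤ (n:ℝ) • A - ((n:ℝ)/α) • B := key ▸ aux_smul_nonneg hBA0 ha.le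
      rwa [sub_nonneg] at h0
    have hcoef : (n : ℝ)/(n + α) = ((n:ℝ)/α) / ((n:ℝ)/α + 1) := by
      have h1 : (0:ℝ) < (n:ℝ) + α := add_pos_of_nonneg_of_pos (Nat.cast_nonneg n) hα'
      field_simp
    calc ((n : ℝ)/(n + α)) • B = (((n:ℝ)/α) / ((n:ℝ)/α + 1)) • B := by rw [hcoef]
      _ ≤ Ring.inverse (Ring.inverse (((n:ℝ)/α) • B + ε • 1) + Ring.inverse (B + ε • 1)) :=
          cfc_lower B hB0 ha hε
      _ ≤ parS A B n ε :=
          par_mono_left (aux_add_unit (aux_smul_nonneg hB0 ha.le) hε).2 (hYf hε).2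
            (aux_add_unit (aux_smul_nonneg hB0 ha.le) hε).1 (hYf hε).1 hXX
  -- pointwise limit facts
  have f1 : ∀ (n : ℕ) (ξ : H), im ⟪P n ξ, ξ⟫ = 0 := by
    intro n ξ
    have h0 : Tendsto (fun ε : ℝ => im ⟪parS A B n ε ξ, ξ⟫) (𝓝[>] (0:ℝ)) (𝓝 0) := by
      refine Tendsto.congr' ?_ tendsto_const_nhds
      filter_upwards [self_mem_nhdsWithin] with ε hε
      exact (((myNonneg_iff _).mp (hS0 n hε)) ξ).1.symm
    exact tendsto_nhds_unique (tendsto_im_inner (hSP n ξ)) h0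
  have f2 : ∀ (n : ℕ) (ξ : H), 0 ≤ re ⟪P n ξ, ξ⟫ := by
    intro n ξ
    refine ge_of_tendsto (tendsto_re_inner (hSP n ξ)) ?_
    filter_upwards [self_mem_nhdsWithin] with ε hε
    exact (((myNonneg_iff _).mp (hS0 n hε)) ξ).2
  have f3 : ∀ (n : ℕ) (ξ : H), re ⟪P n ξ, ξ⟫ ≤ re ⟪B ξ, ξ⟫ := by
    intro n ξ
    have hub : Tendsto (fun ε : ℝ => re ⟪B ξ, ξ⟫ + ε * ‖ξ‖ ^ 2) (𝓝[>] (0:ℝ))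
        (𝓝 (re ⟪B ξ, ξ⟫)) := by
      have hc : Continuous (fun ε : ℝ => re ⟪B ξ, ξ⟫ + ε * ‖ξ‖ ^ 2) := by continuity
      have h2 : Tendsto (fun ε : ℝ => re ⟪B ξ, ξ⟫ + ε * ‖ξ‖ ^ 2) (𝓝[>] (0:ℝ))
          (𝓝 (re ⟪B ξ, ξ⟫ + 0 * ‖ξ‖ ^ 2)) := (hc.tendsto 0).mono_left nhdsWithin_le_nhds
      simpa using h2
    refine le_of_tendsto_of_tendsto (tendsto_re_inner (hSP n ξ)) hub ?_
    filter_upwards [self_mem_nhdsWithin] with ε hε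
    have := form_le (hSY n hε) ξ
    rwa [form_add_smul_one] at this
  have f4 : ∀ (n : ℕ), 1 ≤ n → ∀ (ξ : H),
      ((n:ℝ)/(n + α)) * re ⟪B ξ, ξ⟫ ≤ re ⟪P n ξ, ξ⟫ := by
    intro n hn ξ
    rcases eq_or_lt_of_le hα with hα' | hα'
    · -- α = 0, B = 0
      have hBzero : B = 0 := by
        have h1 : B ≤ 0 := by
          have := hBA0
          rw [← hα', zero_smul, zero_sub] at this
          simpa using neg_nonneg.mp this
        exact le_antisymm h1 hB0
      rw [hBzero]
      simpa using f2 n ξ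
    · refine ge_of_tendsto (tendsto_re_inner (hSP n ξ)) ?_
      filter_upwards [self_mem_nhdsWithin] with ε hε
      have := form_le (hSlow n hn hα' hε) ξ
      rwa [re_form_smul] at this
  have f5 : ∀ (n : ℕ) (ξ : H), re ⟪P n ξ, ξ⟫ ≤ re ⟪P (n+1) ξ, ξ⟫ := by
    intro n ξ
    refine le_of_tendsto_of_tendsto (tendsto_re_inner (hSP n ξ))
      (tendsto_re_inner (hSP (n+1) ξ)) ?_
    filter_upwards [self_mem_nhdsWithin] with ε hε
    exact form_le (hSmono n hε) ξ
  have himB : ∀ ξ : H, im ⟪B ξ, ξ⟫ = 0 := fun ξ => (((myNonneg_iff B).mp hB0) ξ).1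
  have hnα : ∀ n : ℕ, 1 ≤ n → (0:ℝ) < n + α := by
    intro n hn
    have : (1:ℝ) ≤ n := by exact_mod_cast hn
    linarith
  refine ⟨?_, ?_, ?_⟩
  · intro n hn
    rw [myIsPos_iff]
    intro ξ
    have hcoef : (α / ((n:ℝ) + α)) = 1 - (n:ℝ)/(n+α) := by
      field_simp
      ring
    constructor
    · rw [im_form_sub, im_form_sub, im_form_smul, himB, f1]
      ring
    · rw [re_form_sub, re_form_sub, re_form_smul]
      have h4 := f4 n hn ξ
      rw [hcoef]
      nlinarith [f4 n hn ξ]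
  · intro n _
    rw [myIsPos_iff]
    intro ξ
    constructor
    · rw [im_form_sub, f1, f1]; ring
    · rw [re_form_sub]
      have := f5 n ξ
      linarith
  · intro ξ
    have hQpos : ∀ n : ℕ, 0 ≤ B - P n := by
      intro n
      rw [myNonneg_iff]
      intro x
      refine ⟨?_, ?_⟩
      · rw [im_form_sub, himB, f1]; ring
      · rw [re_form_sub]
        have := f3 n x
        linarith
    have hPpos : ∀ n : ℕ, 0 ≤ P n := by
      intro n
      rw [myNonneg_iff]
      intro x
      exact ⟨f1 n x, f2 n x⟩
    have hQleB : ∀ n : ℕ, B - P n ≤ B := fun n => sub_le_self B (hPpos n)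
    have hQnorm : ∀ n : ℕ, ‖B - P n‖ ≤ ‖B‖ := fun n =>
      CStarAlgebra.norm_le_norm_of_nonneg_of_le (hQpos n) (hQleB n)
    have hBre : 0 ≤ re ⟪B ξ, ξ⟫ := (((myNonneg_iff B).mp hB0) ξ).2
    have hsq : ∀ n : ℕ, 1 ≤ n →
        ‖(B - P n) ξ‖ ^ 2 ≤ ‖B‖ * (α/((n:ℝ)+α) * re ⟪B ξ, ξ⟫) := by
      intro n hn
      have h1 := norm_apply_sq_le (hQpos n) ξ
      have h2 : re ⟪(B - P n) ξ, ξ⟫ ≤ α/((n:ℝ)+α) * re ⟪B ξ, ξ⟫ := by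
        rw [re_form_sub]
        have h4 := f4 n hn ξ
        have hcoef : (α / ((n:ℝ) + α)) = 1 - (n:ℝ)/(n+α) := by
          field_simp
          ring
        rw [hcoef]
        nlinarith
      have h2' : 0 ≤ re ⟪(B - P n) ξ, ξ⟫ := (((myNonneg_iff _).mp (hQpos n)) ξ).2
      calc ‖(B - P n) ξ‖ ^ 2 ≤ ‖B - P n‖ * re ⟪(B - P n) ξ, ξ⟫ := h1
        _ ≤ ‖B‖ * (α/((n:ℝ)+α) * re ⟪B ξ, ξ⟫) :=
            mul_le_mul (hQnorm n) h2 h2' (norm_nonneg B)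
    have hc0 : Tendsto (fun n : ℕ => ‖B‖ * (α/((n:ℝ)+α) * re ⟪B ξ, ξ⟫)) atTop (𝓝 0) := by
      have h1 : Tendsto (fun n : ℕ => ((n:ℝ)+α)⁻¹) atTop (𝓝 0) := by
        apply Filter.Tendsto.inv_tendsto_atTop
        exact tendsto_atTop_add_const_right atTop α tendsto_natCast_atTop_atTop
      have h2 : Tendsto (fun n : ℕ => ‖B‖ * (α * ((n:ℝ)+α)⁻¹ * re ⟪B ξ, ξ⟫)) atTop (𝓝 0) := by
        have := ((h1.const_mul α).mul_const (re ⟪B ξ, ξ⟫)).const_mul ‖B‖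
        simpa using this
      simpa [div_eq_mul_inv] using h2
    have hsq0 : Tendsto (fun n : ℕ => ‖(B - P n) ξ‖ ^ 2) atTop (𝓝 0) := by
      refine squeeze_zero' ?_ ?_ hc0
      · filter_upwards with n
        positivity
      · filter_upwards [eventually_ge_atTop 1] with n hn
        exact hsq n hn
    have hn0 : Tendsto (fun n : ℕ => ‖(B - P n) ξ‖) atTop (𝓝 0) := by
      have := (Real.continuous_sqrt.tendsto 0).comp hsq0
      simp only [Function.comp_def, Real.sqrt_sq (norm_nonneg _)] at this
      simpa using this
    have hv0 : Tendsto (fun n : ℕ => (B - P n) ξ) atTop (𝓝 0) :=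
      tendsto_zero_iff_norm_tendsto_zero.mpr hn0
    have hfinal := (tendsto_const_nhds (x := B ξ) (f := atTop (α := ℕ))).sub hv0
    simp only [ContinuousLinearMap.sub_apply, sub_sub_cancel, sub_zero] at hfinal
    exact hfinal

end main


/-- let `A, B` be bounded positive operators with `C = A + B`, and suppose
`B ≤ αA` for some `α ≥ 0`. Let `Pₙ = nA : B` be the parallel sums (strong limits of
`((nA+εI)⁻¹ + (B+εI)⁻¹)⁻¹` as `ε ↓ 0`). Then `B − (nA : B) ≤ (α/(n+α))·B` in the Loewner
order for all `n ≥ 1`, and consequently `nA : B` increases strongly to `B`. -/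
theorem ando_absolute_continuity_lemma {H : Type*} [NormedAddCommGroup H]
    [InnerProductSpace ℂ H] [CompleteSpace H]
    (A B : H →L[ℂ] H) (hA : A.IsPositive) (hB : B.IsPositive)
    (C : H →L[ℂ] H) (hC : C = A + B)
    (α : ℝ) (hα : 0 ≤ α) (hBA : (α • A - B).IsPositive)
    (P : ℕ → (H →L[ℂ] H))
    (hP : ∀ n : ℕ, ∀ ξ : H, Tendsto (fun ε : ℝ =>
        (Ring.inverse (Ring.inverse ((n : ℝ) • A + ε • 1) + Ring.inverse (B + ε • 1))) ξ)
      (𝓝[>] (0 : ℝ)) (𝓝 (P n ξ))) :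
    (∀ n : ℕ, 1 ≤ n → ((α / (n + α)) • B - (B - P n)).IsPositive) ∧
      (∀ n : ℕ, 1 ≤ n → (P (n + 1) - P n).IsPositive) ∧
      ∀ ξ : H, Tendsto (fun n : ℕ => P n ξ) atTop (𝓝 (B ξ)) := by
  exact ando_absolute_continuity_lemma' A B hA hB α hα hBA P hP
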